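/- Let g_c : [−1, 1] → ℝ be defined by g_c(x) = 1 − 4x² for |x| ≤ 1/2 and g_c(x) = −1 + 4(1 − |x|)² for 1/2 ≤ |x| ≤ 1. Then for every x ∈ [−1, 1], the series Σ_{n=1}^{∞} (32·(−1)^{n+1}/((2n−1)³π³)) cos((2n−1)πx) converges and g_c(x) = Σ_{n=1}^{∞} (32·(−1)^{n+1}/((2n−1)³π³)) cos((2n−1)πx). -/

import Mathlib

open Real

private lemma b3eval (t : ℝ) : (Polynomial.map (algebraMap ℚ ℝ) (Polynomial.bernoulli 3)).eval t
    = t ^ 3 - 3/2 * t ^ 2 + 1/2 * t := by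
  simp [Polynomial.bernoulli, Finset.sum_range_succ, bernoulli_zero, bernoulli_one, bernoulli'_two,
    bernoulli, bernoulli'_zero, bernoulli'_one, bernoulli'_three]
  ring

private lemma keylem {x : ℝ} (hx0 : 0 ≤ x) (hx : x ≤ 1/2) :
    HasSum (fun n : ℕ =>
        32 * (-1 : ℝ) ^ n / ((2 * (n : ℝ) + 1) ^ 3 * π ^ 3) *
          Real.cos ((2 * (n : ℝ) + 1) * π * x)) (1 - 4 * x ^ 2) := by
  set y : ℝ := x + 1/2 with hy
  have hy1 : y ∈ Set.Icc (0:ℝ) 1 := ⟨by simp [hy]; linarith, by simp [hy]; linarith⟩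
  have hy2 : y/2 ∈ Set.Icc (0:ℝ) 1 := ⟨by linarith [hy1.1], by linarith [hy1.2]⟩
  set g : ℕ → ℝ := fun n => 1 / (n:ℝ)^3 * Real.sin (π * n * y) with hg
  have hfull : HasSum g ((2*π)^3/12 * ((y/2)^3 - 3/2*(y/2)^2 + 1/2*(y/2))) := by
    have h := hasSum_one_div_nat_pow_mul_sin (k := 1) one_ne_zero hy2
    rw [show 2*1+1 = 3 from rfl, b3eval] at h
    have e1 : (fun n : ℕ => 1/(n:ℝ)^3 * Real.sin (2*π*n*(y/2))) = g := by
      funext n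
      rw [show 2*π*(n:ℝ)*(y/2) = π*n*y by ring]
    have e2 : (-1:ℝ)^(1+1) * (2*π)^3/2/(Nat.factorial 3 : ℝ) * ((y/2)^3 - 3/2*(y/2)^2 + 1/2*(y/2))
        = (2*π)^3/12 * ((y/2)^3 - 3/2*(y/2)^2 + 1/2*(y/2)) := by
      rw [show ((Nat.factorial 3 : ℕ) : ℝ) = 6 by norm_num [Nat.factorial]]; ring
    rw [e1, e2] at h
    exact h
  have heven : HasSum (fun k : ℕ => g (2*k))
      ((2*π)^3/12 * (y^3 - 3/2*y^2 + 1/2*y) / 8) := by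
    have h := hasSum_one_div_nat_pow_mul_sin (k := 1) one_ne_zero hy1
    rw [show 2*1+1 = 3 from rfl, b3eval] at h
    have h8 := h.div_const 8
    have e1 : (fun n : ℕ => 1/(n:ℝ)^3 * Real.sin (2*π*n*y) / 8) = fun k : ℕ => g (2*k) := by
      funext k
      simp only [hg]
      push_cast
      rw [show π*(2*(k:ℝ))*y = 2*π*k*y by ring]
      ring
    rw [e1] at h8
    convert h8 using 1
    · rfl
    rw [show ((Nat.factorial 3 : ℕ) : ℝ) = 6 by norm_num [Nat.factorial]]; ring
  have hsummodd : Summable (fun k : ℕ => g (2*k+1)) :=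
    hfull.summable.comp_injective (fun a b h => by omega)
  obtain ⟨O, hO⟩ := hsummodd
  have hcomb := HasSum.even_add_odd heven hO
  have hOeq : O = (2*π)^3/12 * ((y/2)^3 - 3/2*(y/2)^2 + 1/2*(y/2))
      - (2*π)^3/12 * (y^3 - 3/2*y^2 + 1/2*y) / 8 := by
    have := hcomb.unique hfull
    linarith
  have htgt : HasSum (fun n : ℕ =>
      32 * (-1 : ℝ) ^ n / ((2 * (n : ℝ) + 1) ^ 3 * π ^ 3) *
        Real.cos ((2 * (n : ℝ) + 1) * π * x)) (32/π^3 * O) := by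
    have h := hO.mul_left (32/π^3)
    have e1 : (fun k : ℕ => 32/π^3 * g (2*k+1)) = fun n : ℕ =>
        32 * (-1 : ℝ) ^ n / ((2 * (n : ℝ) + 1) ^ 3 * π ^ 3) *
          Real.cos ((2 * (n : ℝ) + 1) * π * x) := by
      funext n
      simp only [hg]
      have hs : Real.sin (π * ((2*n+1 : ℕ):ℝ) * y)
          = (-1:ℝ)^n * Real.cos ((2*(n:ℝ)+1)*π*x) := by
        rw [show π * ((2*n+1:ℕ):ℝ) * y = ((2*(n:ℝ)+1)*π*x + π/2) + n*π by push_cast; rw [hy]; ring,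
          Real.sin_add_nat_mul_pi, Real.sin_add_pi_div_two]
      push_cast
      push_cast at hs
      rw [hs]
      have h2n : (2*(n:ℝ)+1)^3 ≠ 0 := by positivity
      field_simp
    rw [e1] at h
    exact h
  rw [hOeq] at htgt
  convert htgt using 1
  have hπ : π ≠ 0 := Real.pi_ne_zero
  rw [hy]
  field_simp
  ring

theorem statement16 (gc : ℝ → ℝ)
    (h1 : ∀ x : ℝ, |x| ≤ 1 / 2 → gc x = 1 - 4 * x ^ 2)
    (h2 : ∀ x : ℝ, 1 / 2 ≤ |x| → |x| ≤ 1 → gc x = -1 + 4 * (1 - |x|) ^ 2) :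
    ∀ x ∈ Set.Icc (-1 : ℝ) 1,
      Summable (fun n : ℕ =>
        32 * (-1 : ℝ) ^ n / ((2 * (n : ℝ) + 1) ^ 3 * π ^ 3) *
          Real.cos ((2 * (n : ℝ) + 1) * π * x)) ∧
      gc x = ∑' n : ℕ,
        32 * (-1 : ℝ) ^ n / ((2 * (n : ℝ) + 1) ^ 3 * π ^ 3) *
          Real.cos ((2 * (n : ℝ) + 1) * π * x) := by
  rintro x ⟨hx1, hx2⟩
  have main : HasSum (fun n : ℕ =>
      32 * (-1 : ℝ) ^ n / ((2 * (n : ℝ) + 1) ^ 3 * π ^ 3) *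
        Real.cos ((2 * (n : ℝ) + 1) * π * x)) (gc x) := by
    have hxabs : ∀ n : ℕ, Real.cos ((2*(n:ℝ)+1)*π*x) = Real.cos ((2*(n:ℝ)+1)*π*|x|) := by
      intro n
      rcases abs_cases x with ⟨h, _⟩ | ⟨h, _⟩
      · rw [h]
      · rw [h, show (2*(n:ℝ)+1)*π*(-x) = -((2*(n:ℝ)+1)*π*x) by ring, Real.cos_neg]
    have ht0 : 0 ≤ |x| := abs_nonneg x
    have ht1 : |x| ≤ 1 := abs_le.mpr ⟨hx1, hx2⟩
    simp only [hxabs]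
    by_cases hc : |x| ≤ 1/2
    · rw [h1 x hc, show 1 - 4*x^2 = 1 - 4*|x|^2 by rw [sq_abs]]
      exact keylem ht0 hc
    · push_neg at hc
      rw [h2 x hc.le ht1]
      have hk := (keylem (x := 1 - |x|) (by linarith) (by linarith)).neg
      have e1 : (fun n : ℕ => -(32 * (-1 : ℝ) ^ n / ((2 * (n : ℝ) + 1) ^ 3 * π ^ 3) *
          Real.cos ((2 * (n : ℝ) + 1) * π * (1 - |x|)))) = fun n : ℕ =>
          32 * (-1 : ℝ) ^ n / ((2 * (n : ℝ) + 1) ^ 3 * π ^ 3) *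
            Real.cos ((2 * (n : ℝ) + 1) * π * |x|) := by
        funext n
        rw [show (2*(n:ℝ)+1)*π*|x| = (π - (2*(n:ℝ)+1)*π*(1-|x|)) + n*(2*π) by ring,
          Real.cos_add_nat_mul_two_pi, Real.cos_pi_sub]
        ring
      rw [e1] at hk
      convert hk using 1
      · rfl
      ring
  exact ⟨main.summable, main.tsum_eq.symm⟩
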